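/- For every nonempty partition κ and every nonzero real number α, (κ_1 − 1)! · ∏_{i=2}^{ℓ(κ)} ∏_{j=0}^{κ_i−1} (j − (i−1)/α) = (−1/α)^{|κ|−1} · (κ′_1 − 1)! · ∏_{i=2}^{ℓ(κ′)} ∏_{j=0}^{κ′_i−1} (j − (i−1)α). -/
import Mathlib

open Finset

private lemma prod_cells_eq (μ : YoungDiagram) (f : ℕ × ℕ → ℝ) :
    ∏ c ∈ μ.cells, f c =
      ∏ i ∈ Finset.range (μ.colLen 0), ∏ j ∈ Finset.range (μ.rowLen i), f (i, j) := by
  classical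
  have hrow : ∀ i : ℕ, ∏ j ∈ Finset.range (μ.rowLen i), f (i, j) =
      ∏ j ∈ Finset.range (μ.rowLen 0), (if (i, j) ∈ μ.cells then f (i, j) else 1) := by
    intro i
    rw [show (∏ j ∈ Finset.range (μ.rowLen i), f (i, j)) =
        ∏ j ∈ Finset.range (μ.rowLen i), (if (i, j) ∈ μ.cells then f (i, j) else 1) from
      Finset.prod_congr rfl fun j hj => by
        rw [if_pos]
        rw [YoungDiagram.mem_cells, YoungDiagram.mem_iff_lt_rowLen]
        exact Finset.mem_range.1 hj]
    apply Finset.prod_subset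
    · exact Finset.range_subset_range.2 (μ.rowLen_anti 0 i (Nat.zero_le i))
    · intro j _ hj'
      rw [if_neg]
      rw [YoungDiagram.mem_cells, YoungDiagram.mem_iff_lt_rowLen]
      intro h
      exact hj' (Finset.mem_range.2 h)
  simp_rw [hrow]
  have hsub : μ.cells ⊆ Finset.range (μ.colLen 0) ×ˢ Finset.range (μ.rowLen 0) := by
    intro c hc
    obtain ⟨i, j⟩ := c
    rw [YoungDiagram.mem_cells] at hc
    refine Finset.mem_product.2 ⟨Finset.mem_range.2 ?_, Finset.mem_range.2 ?_⟩
    · rw [← YoungDiagram.mem_iff_lt_colLen]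
      exact μ.up_left_mem le_rfl (Nat.zero_le j) hc
    · exact lt_of_lt_of_le (YoungDiagram.mem_iff_lt_rowLen.1 hc)
        (μ.rowLen_anti 0 i (Nat.zero_le i))
  calc ∏ c ∈ μ.cells, f c
      = ∏ c ∈ Finset.range (μ.colLen 0) ×ˢ Finset.range (μ.rowLen 0),
          (if c ∈ μ.cells then f c else 1) :=
        (Finset.prod_congr rfl fun c hc => (if_pos hc).symm).trans
          (Finset.prod_subset hsub fun c _ hc => if_neg hc)
    _ = _ := Finset.prod_product _ _ _

private lemma prod_ite_factorial (n : ℕ) :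
    ∏ j ∈ Finset.range n, (if j = 0 then (1 : ℝ) else (j : ℝ)) =
      (Nat.factorial (n - 1) : ℝ) := by
  induction n with
  | zero => simp
  | succ n ih =>
    rw [Finset.prod_range_succ, ih]
    cases n with
    | zero => simp
    | succ m =>
      rw [if_neg (Nat.succ_ne_zero m)]
      simp [Nat.factorial_succ]
      ring

private lemma structured_eq (μ : YoungDiagram) (hμ : μ.cells.Nonempty) (β : ℝ) :
    (Nat.factorial (μ.rowLen 0 - 1) : ℝ) *
        ∏ i ∈ Finset.Icc 2 (μ.colLen 0), ∏ j ∈ Finset.range (μ.rowLen (i - 1)),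
          ((j : ℝ) - ((i - 1 : ℕ) : ℝ) * β) =
      ∏ c ∈ μ.cells, (if c = (0, 0) then (1 : ℝ) else ((c.2 : ℝ) - (c.1 : ℝ) * β)) := by
  classical
  have h00 : (0, 0) ∈ μ := by
    obtain ⟨⟨i, j⟩, hc⟩ := hμ
    exact μ.up_left_mem (Nat.zero_le _) (Nat.zero_le _) ((μ.mem_cells _).1 hc)
  have hℓ : 1 ≤ μ.colLen 0 := YoungDiagram.mem_iff_lt_colLen.1 h00
  rw [prod_cells_eq]
  have hsplit : μ.colLen 0 = (μ.colLen 0 - 1) + 1 := (Nat.succ_pred_eq_of_pos hℓ).symm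
  conv_rhs => rw [hsplit, Finset.prod_range_succ']
  have hrow0 : (∏ j ∈ Finset.range (μ.rowLen 0),
      (if ((0 : ℕ), j) = ((0 : ℕ), (0 : ℕ)) then (1 : ℝ) else ((j : ℝ) - ((0 : ℕ) : ℝ) * β)))
      = (Nat.factorial (μ.rowLen 0 - 1) : ℝ) := by
    rw [← prod_ite_factorial (μ.rowLen 0)]
    refine Finset.prod_congr rfl fun j _ => ?_
    by_cases h : j = 0 <;> simp [h]
  rw [hrow0, mul_comm]
  congr 1
  have hIcc : Finset.Icc 2 (μ.colLen 0) = Finset.Ico 2 (μ.colLen 0 + 1) := by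
    rw [Finset.Ico_add_one_right_eq_Icc]
  rw [hIcc, Finset.prod_Ico_eq_prod_range]
  rw [show μ.colLen 0 + 1 - 2 = μ.colLen 0 - 1 by omega]
  refine Finset.prod_congr rfl fun i _ => ?_
  rw [show 2 + i - 1 = i + 1 by omega]
  refine Finset.prod_congr rfl fun j _ => ?_
  rw [if_neg (by simp)]

theorem r_kappa_conjugate (μ : YoungDiagram) (hμ : μ.cells.Nonempty) (α : ℝ) (hα : α ≠ 0) :
    (Nat.factorial (μ.rowLen 0 - 1) : ℝ) *
        ∏ i ∈ Finset.Icc 2 (μ.colLen 0), ∏ j ∈ Finset.range (μ.rowLen (i - 1)),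
          ((j : ℝ) - ((i - 1 : ℕ) : ℝ) / α) =
      (-1 / α) ^ (μ.cells.card - 1) * (Nat.factorial (μ.colLen 0 - 1) : ℝ) *
        ∏ i ∈ Finset.Icc 2 (μ.rowLen 0), ∏ j ∈ Finset.range (μ.colLen (i - 1)),
          ((j : ℝ) - ((i - 1 : ℕ) : ℝ) * α) := by
  classical
  have h00 : (0, 0) ∈ μ.cells := by
    obtain ⟨⟨i, j⟩, hc⟩ := hμ
    exact (μ.mem_cells _).2 (μ.up_left_mem (Nat.zero_le _) (Nat.zero_le _) ((μ.mem_cells _).1 hc))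
  have hL := structured_eq μ hμ (1 / α)
  simp only [div_eq_mul_inv, one_div, one_mul] at hL ⊢
  rw [hL, mul_assoc]
  have hμt : μ.transpose.cells.Nonempty := by
    obtain ⟨c, hc⟩ := hμ
    exact ⟨c.swap, by simp [(YoungDiagram.mem_cells _).1 hc]⟩
  have hR := structured_eq μ.transpose hμt α
  simp_rw [YoungDiagram.rowLen_transpose, YoungDiagram.colLen_transpose] at hR
  rw [hR]
  have hcells : μ.transpose.cells = μ.cells.map (Equiv.prodComm ℕ ℕ).toEmbedding := rfl
  rw [hcells, Finset.prod_map]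
  have hstep : ∀ c ∈ μ.cells,
      (if (Equiv.prodComm ℕ ℕ).toEmbedding c = ((0 : ℕ), (0 : ℕ)) then (1 : ℝ)
        else ((((Equiv.prodComm ℕ ℕ).toEmbedding c).2 : ℝ)
          - (((Equiv.prodComm ℕ ℕ).toEmbedding c).1 : ℝ) * α))
      = (if c = ((0 : ℕ), (0 : ℕ)) then (1 : ℝ) else (-α))
        * (if c = ((0 : ℕ), (0 : ℕ)) then (1 : ℝ) else ((c.2 : ℝ) - (c.1 : ℝ) * α⁻¹)) := by
    intro c _
    obtain ⟨i, j⟩ := c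
    by_cases h : (i, j) = ((0 : ℕ), (0 : ℕ))
    · simp [h]
    · have h' : ((j : ℕ), (i : ℕ)) ≠ ((0 : ℕ), (0 : ℕ)) := by
        intro he
        apply h
        rw [Prod.mk.injEq] at he ⊢
        exact ⟨he.2, he.1⟩
      simp only [Equiv.coe_toEmbedding, Equiv.prodComm_apply, Prod.swap_prod_mk, h, h',
        if_false, if_neg, ite_false]
      field_simp
      ring
  rw [Finset.prod_congr rfl hstep, Finset.prod_mul_distrib]
  have hconst : (∏ c ∈ μ.cells, (if c = ((0 : ℕ), (0 : ℕ)) then (1 : ℝ) else (-α)))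
      = (-α) ^ (μ.cells.card - 1) := by
    rw [← Finset.mul_prod_erase _ _ h00, if_pos rfl, one_mul]
    rw [Finset.prod_congr rfl (fun c hc => if_neg (Finset.ne_of_mem_erase hc)),
      Finset.prod_const, Finset.card_erase_of_mem h00]
  rw [hconst, ← mul_assoc, ← mul_pow]
  have h1 : (-1 : ℝ) * α⁻¹ * (-α) = 1 := by field_simp
  rw [h1, one_pow, one_mul]
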